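/- arXiv:1611.10105 — 3 statements merged into one kernel-verified Lean document; each statement's English description precedes it below -/
import Mathlib

section
/- Let A ⊆ ℝⁿ be a nonempty closed convex set with A ≠ ℝⁿ. Let z₀ ∈ A and R > 0 be such that 𝒞_R(z₀) ⊆ A, and let z̄ ∈ ∂A satisfy ‖z̄ − z₀‖_𝒞 = R. Then for every t ∈ (−∞, R), setting z_t := z₀ + ((R−t)/R)(z̄ − z₀), one has: (i) 𝒞_{R−t}(z₀) ⊆ {x ∈ ℝⁿ : d_A(x) ≥ t}; (ii) ‖z_t − z₀‖_𝒞 = R − t; and (iii) d_A(z_t) = t. -/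
open MeasureTheory Set Metric Filter
open scoped Pointwise Classical

/-- The signed distance to `A` measured in the gauge norm of the convex body `C`:
`d_A(x) = dist(x, ∂A)` for `x ∈ A` and `d_A(x) = −dist(x, ∂A)` for `x ∉ A`. -/
noncomputable def signedDistC {n : ℕ} (C A : Set (EuclideanSpace ℝ (Fin n)))
    (x : EuclideanSpace ℝ (Fin n)) : ℝ :=
  if x ∈ A then sInf ((fun z => gauge C (z - x)) '' frontier A)
  else -sInf ((fun z => gauge C (z - x)) '' frontier A)

set_option maxHeartbeats 1000000 in
/-- touching the level sets of the signed distance function by concentric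
anisotropic spheres. -/
theorem touching_level_sets_by_spheres
    (n : ℕ) (hn : 2 ≤ n)
    -- the convex body 𝒞
    (C : Set (EuclideanSpace ℝ (Fin n)))
    (hCcomp : IsCompact C) (hCconv : Convex ℝ C) (hCeven : -C = C)
    (hC0 : (0 : EuclideanSpace ℝ (Fin n)) ∈ interior C)
    (ρ ρ' : ℝ) (hρ : 0 < ρ) (hρρ' : ρ < ρ')
    (hCin : ∀ p ∈ frontier C, ∃ c, p ∈ Metric.sphere c ρ ∧ Metric.closedBall c ρ ⊆ C)
    (hCout : ∀ p ∈ frontier C, ∃ c', p ∈ Metric.sphere c' ρ' ∧ C ⊆ Metric.closedBall c' ρ')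
    -- the convex set A
    (A : Set (EuclideanSpace ℝ (Fin n))) (hAne : A.Nonempty) (hAcl : IsClosed A)
    (hAconv : Convex ℝ A) (hAproper : A ≠ Set.univ)
    -- the inner touching ball
    (z₀ : EuclideanSpace ℝ (Fin n)) (hz₀ : z₀ ∈ A)
    (R : ℝ) (hR : 0 < R) (hball : z₀ +ᵥ R • C ⊆ A)
    (zbar : EuclideanSpace ℝ (Fin n)) (hzbar : zbar ∈ frontier A)
    (hgauge : gauge C (zbar - z₀) = R) :
    ∀ t : ℝ, t < R →
      (z₀ +ᵥ (R - t) • C ⊆ {x : EuclideanSpace ℝ (Fin n) | t ≤ signedDistC C A x}) ∧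
      gauge C ((z₀ + ((R - t) / R) • (zbar - z₀)) - z₀) = R - t ∧
      signedDistC C A (z₀ + ((R - t) / R) • (zbar - z₀)) = t := by
  intro t ht
  have hRt : (0:ℝ) < R - t := by linarith
  -- basic facts about C
  have hC0' : (0 : EuclideanSpace ℝ (Fin n)) ∈ C := interior_subset hC0
  have hCnhds := mem_interior_iff_mem_nhds.mp hC0
  have habs : Absorbent ℝ C := absorbent_nhds_zero hCnhds
  have hCclosed : IsClosed C := hCcomp.isClosed
  have hsymm : ∀ x ∈ C, -x ∈ C := by
    intro x hx
    rw [← hCeven, Set.mem_neg, neg_neg]; exact hx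
  have gneg : ∀ w : EuclideanSpace ℝ (Fin n), gauge C (-w) = gauge C w := gauge_neg hsymm
  have gsmul : ∀ (r : ℝ), 0 ≤ r → ∀ w : EuclideanSpace ℝ (Fin n), gauge C (r • w) = r * gauge C w := by
    intro r hr w
    rw [gauge_smul_of_nonneg hr, smul_eq_mul]
  -- membership iff gauge ≤ r
  have mem_iff : ∀ (r : ℝ), 0 < r → ∀ w : EuclideanSpace ℝ (Fin n), w ∈ r • C ↔ gauge C w ≤ r := by
    intro r hr w
    constructor
    · exact fun hw => gauge_le_of_mem hr.le hw
    · intro hw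
      have h1 : gauge C (r⁻¹ • w) ≤ 1 := by
        rw [gsmul r⁻¹ (by positivity) w]
        rw [inv_mul_le_one₀ hr]  -- maybe wrong name; fix later
        exact hw
      have h2 : r⁻¹ • w ∈ C := by
        have := (gauge_le_one_iff_mem_closure hCconv hCnhds).mp h1
        rwa [hCclosed.closure_eq] at this
      have : r • r⁻¹ • w ∈ r • C := smul_mem_smul_set h2
      rwa [smul_inv_smul₀ hr.ne'] at this
  -- strict gauge bound gives membership in scaled interior
  have mem_int : ∀ (r : ℝ), 0 < r → ∀ w : EuclideanSpace ℝ (Fin n), gauge C w < r → w ∈ r • interior C := by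
    intro r hr w hw
    have h1 : gauge C (r⁻¹ • w) < 1 := by
      rw [gsmul r⁻¹ (by positivity) w]
      rw [inv_mul_lt_one₀ hr]  -- maybe wrong name; fix later
      exact hw
    have h2 : r⁻¹ • w ∈ interior C := (gauge_lt_one_iff_mem_interior hCconv hCnhds).mp h1
    have : r • r⁻¹ • w ∈ r • interior C := smul_mem_smul_set h2
    rwa [smul_inv_smul₀ hr.ne'] at this
  -- interior balls inside A
  have hop : IsOpen (z₀ +ᵥ R • interior C) := IsOpen.vadd (isOpen_interior.smul₀ hR.ne') z₀
  have hsub : z₀ +ᵥ R • interior C ⊆ A := by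
    intro y hy
    obtain ⟨w, hw, rfl⟩ := Set.mem_vadd_set.mp hy
    exact hball (Set.vadd_mem_vadd_set (Set.smul_set_mono interior_subset hw))
  have hz₀int : z₀ ∈ interior A := by
    refine interior_maximal hsub hop ?_
    have : (0 : EuclideanSpace ℝ (Fin n)) ∈ R • interior C := ⟨0, hC0, smul_zero R⟩
    simpa using Set.vadd_mem_vadd_set (a := z₀) this
  -- frontier points are gauge-far from z₀
  have hfar : ∀ z ∈ frontier A, R ≤ gauge C (z - z₀) := by
    intro z hz
    by_contra h
    push_neg at h
    have hm : z - z₀ ∈ R • interior C := mem_int R hR _ h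
    have : z ∈ interior A := by
      refine interior_maximal hsub hop ?_
      have := Set.vadd_mem_vadd_set (a := z₀) hm
      simpa using this
    exact hz.2 this
  -- nonempty frontier, bddBelow
  have hfne : (frontier A).Nonempty := nonempty_frontier_iff.mpr ⟨hAne, hAproper⟩
  have hbdd : ∀ x : EuclideanSpace ℝ (Fin n), BddBelow ((fun z => gauge C (z - x)) '' frontier A) := by
    intro x
    refine ⟨0, ?_⟩
    rintro b ⟨z, _, rfl⟩
    exact gauge_nonneg _
  -- key lower bound when x ∈ A
  have keyA : ∀ x : EuclideanSpace ℝ (Fin n), gauge C (x - z₀) ≤ R - t → x ∈ A → t ≤ signedDistC C A x := by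
    intro x hx hxA
    rw [signedDistC, if_pos hxA]
    refine le_csInf (hfne.image _) ?_
    rintro b ⟨z, hz, rfl⟩
    have h1 := hfar z hz
    have h2 : gauge C (z - z₀) ≤ gauge C (z - x) + gauge C (x - z₀) := by
      have := gauge_add_le hCconv habs (z - x) (x - z₀)
      rwa [sub_add_sub_cancel] at this
    simp only []
    linarith
  -- segment crossing for x ∉ A
  have cross : ∀ x : EuclideanSpace ℝ (Fin n), x ∉ A →
      ∃ z ∈ frontier A, gauge C (z - x) + R ≤ gauge C (x - z₀) := by
    intro x hx
    set f : ℝ → EuclideanSpace ℝ (Fin n) := fun s => z₀ + s • (x - z₀) with hf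
    have hfc : Continuous f := by
      apply Continuous.add continuous_const
      exact continuous_id.smul continuous_const
    set S := f ⁻¹' A ∩ Icc (0:ℝ) 1 with hS
    have hScl : IsClosed S := (hAcl.preimage hfc).inter isClosed_Icc
    have hSne : S.Nonempty := ⟨0, by simpa [hS, hf] using hz₀, by simp⟩
    have hSbdd : BddAbove S := ⟨1, fun s hs => hs.2.2⟩
    set s₁ := sSup S with hs₁
    have hmem : s₁ ∈ S := hScl.csSup_mem hSne hSbdd
    have hs0 : 0 ≤ s₁ := hmem.2.1
    have hsle : s₁ ≤ 1 := hmem.2.2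
    have hsne1 : s₁ ≠ 1 := by
      intro h
      apply hx
      have := hmem.1
      simp only [hS, Set.mem_preimage, hf, h, one_smul] at this
      simpa using this
    have hslt : s₁ < 1 := lt_of_le_of_ne hsle hsne1
    have hzfr : f s₁ ∈ frontier A := by
      refine ⟨subset_closure hmem.1, ?_⟩
      intro hint
      have hopen : IsOpen (f ⁻¹' interior A) := isOpen_interior.preimage hfc
      rcases Metric.isOpen_iff.mp hopen s₁ hint with ⟨δ, hδ, hballδ⟩
      set ε := min (δ/2) ((1 - s₁)/2) with hε
      have hεpos : 0 < ε := lt_min (by linarith) (by linarith)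
      have h1 : s₁ + ε ∈ S := by
        constructor
        · have : s₁ + ε ∈ Metric.ball s₁ δ := by
            simp only [Metric.mem_ball, Real.dist_eq]
            have : ε ≤ δ/2 := min_le_left _ _
            rw [abs_of_pos (by linarith)]
            · linarith
          show f (s₁ + ε) ∈ A
          exact interior_subset (hballδ this)
        · constructor
          · linarith
          · have : ε ≤ (1 - s₁)/2 := min_le_right _ _
            linarith
      have := le_csSup hSbdd h1
      linarith
    refine ⟨f s₁, hzfr, ?_⟩
    have e1 : gauge C (f s₁ - z₀) = s₁ * gauge C (x - z₀) := by
      have : f s₁ - z₀ = s₁ • (x - z₀) := by simp [hf]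
      rw [this, gsmul _ hs0]
    have e2 : gauge C (f s₁ - x) = (1 - s₁) * gauge C (x - z₀) := by
      have : f s₁ - x = -((1 - s₁) • (x - z₀)) := by
        simp only [hf]
        module
      rw [this, gneg, gsmul _ (by linarith)]
    have h1 := hfar _ hzfr
    rw [e1] at h1
    rw [e2]
    nlinarith [gauge_nonneg (x - z₀) (s := C)]
  have keyNA : ∀ x : EuclideanSpace ℝ (Fin n), gauge C (x - z₀) ≤ R - t → x ∉ A → t ≤ signedDistC C A x := by
    intro x hx hxA
    rw [signedDistC, if_neg hxA]
    obtain ⟨z, hz, hle⟩ := cross x hxA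
    have h1 : sInf ((fun z => gauge C (z - x)) '' frontier A) ≤ gauge C (z - x) :=
      csInf_le (hbdd x) ⟨z, hz, rfl⟩
    linarith
  -- part (i)
  have part1 : z₀ +ᵥ (R - t) • C ⊆ {x : EuclideanSpace ℝ (Fin n) | t ≤ signedDistC C A x} := by
    intro x hx
    obtain ⟨w, hw, rfl⟩ := Set.mem_vadd_set.mp hx
    have hg : gauge C ((z₀ +ᵥ w) - z₀) ≤ R - t := by
      have := (mem_iff (R - t) hRt w).mp hw
      simpa using this
    by_cases hxA : (z₀ +ᵥ w) ∈ A
    · exact keyA _ hg hxA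
    · exact keyNA _ hg hxA
  -- part (ii)
  have hcnn : (0:ℝ) ≤ (R - t)/R := div_nonneg hRt.le hR.le
  have part2 : gauge C ((z₀ + ((R - t) / R) • (zbar - z₀)) - z₀) = R - t := by
    rw [add_sub_cancel_left, gsmul _ hcnn, hgauge]
    field_simp
  refine ⟨part1, part2, ?_⟩
  -- part (iii)
  set zt : EuclideanSpace ℝ (Fin n) := z₀ + ((R - t) / R) • (zbar - z₀) with hzt
  have hztg : gauge C (zt - z₀) = R - t := part2
  rcases le_or_gt 0 t with ht0 | ht0
  · -- t ≥ 0 : zt ∈ A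
    have hztA : zt ∈ A := by
      apply hball
      refine Set.mem_vadd_set.mpr ⟨zt - z₀, (mem_iff R hR _).mpr ?_, by simp⟩
      rw [hztg]; linarith
    have hub : gauge C (zbar - zt) = t := by
      have heq : zbar - zt = (1 - (R - t)/R) • (zbar - z₀) := by
        simp only [hzt]
        module
      have hcoef : 1 - (R - t)/R = t/R := by field_simp; ring
      rw [heq, hcoef, gsmul _ (div_nonneg ht0 hR.le), hgauge]
      field_simp
    refine le_antisymm ?_ ?_
    · rw [signedDistC, if_pos hztA]
      calc sInf ((fun z => gauge C (z - zt)) '' frontier A)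
          ≤ gauge C (zbar - zt) := csInf_le (hbdd _) ⟨zbar, hzbar, rfl⟩
        _ = t := hub
    · exact keyA zt (le_of_eq hztg) hztA
  · -- t < 0 : zt ∉ A
    set θ : ℝ := R / (R - t) with hθdef
    have hθpos : 0 < θ := div_pos hR hRt
    have hθlt : θ < 1 := by
      rw [hθdef, div_lt_one hRt]; linarith
    have hθc : θ * ((R - t)/R) = 1 := by
      rw [hθdef]; field_simp
    have hcomb : zbar = (1 - θ) • z₀ + θ • zt := by
      have : (1 - θ) • z₀ + θ • (z₀ + ((R - t)/R) • (zbar - z₀))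
          = z₀ + (θ * ((R - t)/R)) • (zbar - z₀) := by module
      rw [hzt, this, hθc, one_smul]
      abel
    have hztA : zt ∉ A := by
      intro hmemA
      have : zbar ∈ interior A := by
        rw [hcomb]
        exact hAconv.combo_interior_self_mem_interior hz₀int hmemA
          (by linarith) hθpos.le (by ring)
      exact hzbar.2 this
    -- lower bound on distance from zt to frontier A
    have hlow : ∀ z ∈ frontier A, -t ≤ gauge C (z - zt) := by
      intro z hz
      by_contra h
      push_neg at h
      have hzA : z ∈ A := hAcl.frontier_subset hz
      set m : EuclideanSpace ℝ (Fin n) := θ • z + (1 - θ) • z₀ with hm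
      have hr2 : (0:ℝ) < (1 - θ) * R := by
        apply mul_pos _ hR
        linarith
      have hkey : gauge C (zbar - m) < (1 - θ) * R := by
        have heq : zbar - m = θ • (zt - z) := by
          have e : θ • (z₀ + ((R - t)/R) • (zbar - z₀)) - θ • z
              = (θ * ((R - t)/R)) • (zbar - z₀) + θ • z₀ - θ • z := by module
          simp only [hm, hzt]
          rw [smul_sub, e, hθc, one_smul]
          module
        have hgneg : gauge C (zt - z) = gauge C (z - zt) := by
          rw [← gneg (zt - z), neg_sub]
        have hθR : θ * (R - t) = R := by
          rw [hθdef]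
          exact div_mul_cancel₀ R hRt.ne'
        have h1θ : (1 - θ) * R = θ * (-t) := by linear_combination -hθR
        rw [heq, gsmul _ hθpos.le, hgneg, h1θ]
        exact mul_lt_mul_of_pos_left h hθpos
      have hball2 : m +ᵥ ((1 - θ) * R) • C ⊆ A := by
        intro y hy
        obtain ⟨w, hw, rfl⟩ := Set.mem_vadd_set.mp hy
        obtain ⟨cc, hcc, rfl⟩ := hw
        have heq2 : m +ᵥ ((1 - θ) * R) • cc = θ • z + (1 - θ) • (z₀ + R • cc) := by
          rw [vadd_eq_add, hm]
          module
        rw [heq2]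
        refine hAconv hzA (hball ?_) hθpos.le (by linarith) (by ring)
        exact Set.mem_vadd_set.mpr ⟨R • cc, smul_mem_smul_set hcc, rfl⟩
      have hop2 : IsOpen (m +ᵥ ((1 - θ) * R) • interior C) :=
        (isOpen_interior.smul₀ hr2.ne').vadd m
      have hsub2 : m +ᵥ ((1 - θ) * R) • interior C ⊆ A := by
        intro y hy
        obtain ⟨w, hw, rfl⟩ := Set.mem_vadd_set.mp hy
        exact hball2 (Set.vadd_mem_vadd_set (Set.smul_set_mono interior_subset hw))
      have : zbar ∈ interior A := by
        refine interior_maximal hsub2 hop2 ?_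
        have hm2 : zbar - m ∈ ((1 - θ) * R) • interior C := mem_int _ hr2 _ hkey
        have := Set.vadd_mem_vadd_set (a := m) hm2
        simpa using this
      exact hzbar.2 this
    have hub : gauge C (zbar - zt) = -t := by
      have heq : zbar - zt = -(((-t)/R) • (zbar - z₀)) := by
        have hcoef : -((-t)/R) = 1 - (R - t)/R := by field_simp; ring
        have e : zbar - zt = (1 - (R - t)/R) • (zbar - z₀) := by
          simp only [hzt]; module
        rw [e, ← hcoef, neg_smul]
      rw [heq, gneg, gsmul _ (div_nonneg (by linarith) hR.le), hgauge]
      field_simp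
    rw [signedDistC, if_neg hztA]
    have h1 : sInf ((fun z => gauge C (z - zt)) '' frontier A) ≤ -t :=
      csInf_le (hbdd _) ⟨zbar, hzbar, hub⟩
    have h2 : -t ≤ sInf ((fun z => gauge C (z - zt)) '' frontier A) := by
      refine le_csInf (hfne.image _) ?_
      rintro b ⟨z, hz, rfl⟩
      exact hlow z hz
    linarith
end

section
/- For every r > 0 there exists δ > 0, depending only on n, s, the ellipticity constants λ, Λ, and r, such that the following holds: for every a > 0 and every bounded w ∈ C¹(ℝⁿ) satisfying Lw(x) ≥ a for all x ∈ B_r with w(x) ≤ 0, and w(x) ≥ −δa for all x ∈ ℝⁿ, one has w(x) > 0 for every x in the closed ball of radius r/2 centered at 0. -/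
open MeasureTheory Set Metric Filter

open Module



lemma exp_pow_aux (x : ℝ) (m : ℕ) : (Real.exp x) ^ (m:ℕ) = Real.exp (m * x) := by
  rw [← Real.exp_nat_mul]

lemma pow_arith {c t : ℝ} (hc : 0 < c) (k n : ℕ) :
    ((c^(k+1) : ℝ))^t * ((c^k : ℝ))^(n:ℕ) = c^t * ((c^(t+(n:ℝ)) : ℝ))^k := by
  have e : c = Real.exp (Real.log c) := (Real.exp_log hc).symm
  have h1 : ((c^(k+1) : ℝ)) = Real.exp (((k+1:ℕ):ℝ) * Real.log c) := by
    rw [← exp_pow_aux, ← e]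
  have h2 : ((c^k : ℝ)) = Real.exp (((k:ℕ):ℝ) * Real.log c) := by
    rw [← exp_pow_aux, ← e]
  rw [h1, h2, Real.rpow_def_of_pos (Real.exp_pos _), Real.log_exp, exp_pow_aux,
    Real.rpow_def_of_pos hc, Real.rpow_def_of_pos hc, exp_pow_aux,
    ← Real.exp_add, ← Real.exp_add]
  congr 1
  push_cast
  ring

lemma aux_cover {n : ℕ} (y : EuclideanSpace ℝ (Fin n)) (hy : y ∈ ball (0:EuclideanSpace ℝ (Fin n)) 1) :
    y ∈ ({(0:EuclideanSpace ℝ (Fin n))} : Set _) ∪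
      ⋃ k : ℕ, (closedBall (0:EuclideanSpace ℝ (Fin n)) ((2:ℝ)⁻¹ ^ k) \ ball 0 ((2:ℝ)⁻¹ ^ (k+1))) := by
  rcases eq_or_ne y 0 with h | h
  · exact Or.inl (by simp [h])
  right
  have hy0 : 0 < ‖y‖ := norm_pos_iff.2 h
  have hy1 : ‖y‖ < 1 := by simpa [mem_ball, dist_eq_norm] using hy
  have hex : ∃ m : ℕ, (2:ℝ)⁻¹ ^ (m+1) < ‖y‖ := by
    obtain ⟨m, hm⟩ := exists_pow_lt_of_lt_one hy0 (by norm_num : (2:ℝ)⁻¹ < 1)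
    exact ⟨m, lt_of_le_of_lt (pow_le_pow_of_le_one (by norm_num) (by norm_num) (by omega)) hm⟩
  classical
  set k := Nat.find hex with hk
  refine mem_iUnion.2 ⟨k, ?_, ?_⟩
  · rcases Nat.eq_zero_or_pos k with h0 | h0
    · simpa [mem_closedBall, dist_eq_norm, h0] using hy1.le
    · have := Nat.find_min hex (m := k - 1) (by omega)
      push_neg at this
      have : ‖y‖ ≤ (2:ℝ)⁻¹ ^ k := by
        have hk1 : k - 1 + 1 = k := by omega
        simpa [hk1] using this
      simpa [mem_closedBall, dist_eq_norm] using this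
  · have := Nat.find_spec hex
    simp only [mem_ball, dist_eq_norm, not_lt]
    rw [sub_zero]; exact this.le

lemma aux_integrableOn_ball {n : ℕ} (hn : 0 < n) {t : ℝ} (hnt : -(n:ℝ) < t) (ht0 : t < 0) :
    IntegrableOn (fun y : EuclideanSpace ℝ (Fin n) => ‖y‖ ^ t)
      (ball (0:EuclideanSpace ℝ (Fin n)) 1) volume := by
  set E := EuclideanSpace ℝ (Fin n)
  haveI : Nontrivial E := by
    refine ⟨⟨0, EuclideanSpace.single (⟨0, hn⟩ : Fin n) 1, fun h => ?_⟩⟩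
    have h2 := congrArg norm h
    rw [norm_zero, EuclideanSpace.norm_single] at h2
    norm_num at h2
  have hmeas : Measurable fun y : E => ‖y‖ ^ t := measurable_norm.pow_const t
  refine ⟨hmeas.aestronglyMeasurable.restrict, ?_⟩
  rw [hasFiniteIntegral_iff_norm]
  set c : ℝ := (2:ℝ)⁻¹ with hc
  have hc0 : (0:ℝ) < c := by norm_num
  have hc1 : c < 1 := by norm_num
  set S : ℕ → Set E := fun k => closedBall 0 (c ^ k) \ ball 0 (c ^ (k+1)) with hS
  set V : ENNReal := volume (ball (0:E) 1) with hV
  have hVlt : V < ⊤ := measure_ball_lt_top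
  set q : ENNReal := ENNReal.ofReal (c ^ (t + (n:ℝ))) with hq
  have hq1 : q < 1 := by
    rw [hq, ← ENNReal.ofReal_one]
    exact (ENNReal.ofReal_lt_ofReal_iff one_pos).2
      (Real.rpow_lt_one hc0.le hc1 (by push_cast; linarith))
  have key : ∀ k : ℕ, (∫⁻ y in S k, ENNReal.ofReal ‖‖y‖ ^ t‖ ∂volume)
      ≤ (ENNReal.ofReal (c ^ t) * V) * q ^ k := by
    intro k
    have hb : ∀ y ∈ S k, ENNReal.ofReal ‖‖y‖ ^ t‖ ≤ ENNReal.ofReal ((c ^ (k+1) : ℝ) ^ t) := by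
      intro y hy
      have h1 : c ^ (k+1) ≤ ‖y‖ := by
        have := hy.2
        simp only [mem_ball, dist_eq_norm, sub_zero, not_lt] at this
        rwa [dist_zero_right] at this
      have h2 : ‖y‖ ^ t ≤ (c ^ (k+1) : ℝ) ^ t :=
        Real.rpow_le_rpow_of_nonpos (pow_pos hc0 _) h1 ht0.le
      have h3 : ‖‖y‖ ^ t‖ = ‖y‖ ^ t := Real.norm_of_nonneg (Real.rpow_nonneg (norm_nonneg y) t)
      rw [h3]
      exact ENNReal.ofReal_le_ofReal h2
    calc ∫⁻ y in S k, ENNReal.ofReal ‖‖y‖ ^ t‖ ∂volume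
        ≤ ∫⁻ _ in S k, ENNReal.ofReal ((c ^ (k+1) : ℝ) ^ t) ∂volume :=
          setLIntegral_mono measurable_const hb
      _ = ENNReal.ofReal ((c ^ (k+1) : ℝ) ^ t) * volume (S k) := setLIntegral_const _ _
      _ ≤ ENNReal.ofReal ((c ^ (k+1) : ℝ) ^ t) * volume (closedBall (0:E) (c ^ k)) := by
          gcongr
          exact diff_subset
      _ = ENNReal.ofReal ((c ^ (k+1) : ℝ) ^ t) * (ENNReal.ofReal ((c ^ k : ℝ) ^ (n:ℕ)) * V) := by
          rw [Measure.addHaar_closedBall _ _ (le_of_lt (pow_pos hc0 k))]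
          congr 3
          simp [E, finrank_euclideanSpace]
      _ = (ENNReal.ofReal (c ^ t) * V) * q ^ k := by
          rw [← mul_assoc, ← ENNReal.ofReal_mul (Real.rpow_nonneg (pow_pos hc0 _).le t),
            pow_arith hc0 k n, hq, ← ENNReal.ofReal_pow (Real.rpow_nonneg hc0.le _),
            ENNReal.ofReal_mul (Real.rpow_nonneg hc0.le t)]
          ring
  calc (∫⁻ y in ball (0:E) 1, ENNReal.ofReal ‖‖y‖ ^ t‖ ∂volume)
      ≤ ∫⁻ y in ({(0:E)} ∪ ⋃ k, S k), ENNReal.ofReal ‖‖y‖ ^ t‖ ∂volume :=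
        lintegral_mono_set (fun y hy => aux_cover y hy)
    _ ≤ (∫⁻ y in ({(0:E)} : Set E), ENNReal.ofReal ‖‖y‖ ^ t‖ ∂volume)
        + ∫⁻ y in (⋃ k, S k), ENNReal.ofReal ‖‖y‖ ^ t‖ ∂volume := lintegral_union_le _ _ _
    _ ≤ 0 + ∑' k, ∫⁻ y in S k, ENNReal.ofReal ‖‖y‖ ^ t‖ ∂volume := by
        gcongr
        · exact le_of_eq (setLIntegral_measure_zero _ _ (measure_singleton 0))
        · exact lintegral_iUnion_le _ _
    _ ≤ 0 + ∑' k, (ENNReal.ofReal (c ^ t) * V) * q ^ k := by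
        gcongr with k
        exact key k
    _ = (ENNReal.ofReal (c ^ t) * V) * (1 - q)⁻¹ := by
        rw [zero_add, ENNReal.tsum_mul_left, ENNReal.tsum_geometric]
    _ < ⊤ := by
        refine ENNReal.mul_lt_top (ENNReal.mul_lt_top ENNReal.ofReal_lt_top hVlt) ?_
        exact lt_top_iff_ne_top.2 (ENNReal.inv_ne_top.2 (by simp [tsub_eq_zero_iff_le, not_le, hq1]))


lemma aux_integrableOn_compl {n : ℕ} {t : ℝ} (ht : t < -(n:ℝ)) :
    IntegrableOn (fun y : EuclideanSpace ℝ (Fin n) => ‖y‖ ^ t)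
      ((ball (0:EuclideanSpace ℝ (Fin n)) 1)ᶜ) volume := by
  set E := EuclideanSpace ℝ (Fin n)
  have hint : Integrable (fun y : E => (2:ℝ)^(-t) * (1 + ‖y‖) ^ (-(-t))) volume := by
    refine (integrable_one_add_norm ?_).const_mul _
    simp only [E, finrank_euclideanSpace, Fintype.card_fin]
    linarith
  refine Integrable.mono' hint.integrableOn
    ((measurable_norm.pow_const t).aestronglyMeasurable.restrict) ?_
  refine (ae_restrict_iff' measurableSet_ball.compl).2 (Filter.Eventually.of_forall ?_)
  intro y hy
  have h1 : (1:ℝ) ≤ ‖y‖ := by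
    simpa [mem_ball, dist_eq_norm, not_lt] using hy
  have h0 : (0:ℝ) < ‖y‖ := lt_of_lt_of_le one_pos h1
  have hnn : ‖(‖y‖ ^ t)‖ = ‖y‖ ^ t := Real.norm_of_nonneg (Real.rpow_nonneg (norm_nonneg y) t)
  rw [hnn, neg_neg]
  have h2 : (1 + ‖y‖) / 2 ≤ ‖y‖ := by linarith
  have h3 : ‖y‖ ^ t ≤ ((1 + ‖y‖)/2) ^ t :=
    Real.rpow_le_rpow_of_nonpos (by linarith) h2 (by push_cast at ht ⊢; nlinarith [Nat.cast_nonneg (α := ℝ) n])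
  refine h3.trans (le_of_eq ?_)
  rw [Real.div_rpow (by linarith) (by norm_num), Real.rpow_neg (by norm_num : (0:ℝ) ≤ 2)]
  field_simp

lemma aux_loclip {n : ℕ} {g : EuclideanSpace ℝ (Fin n) → ℝ} (hg : ContDiff ℝ 1 g)
    (x : EuclideanSpace ℝ (Fin n)) :
    ∃ K : ℝ, 0 ≤ K ∧ ∀ y : EuclideanSpace ℝ (Fin n), ‖y‖ ≤ 1 → |g x - g (x + y)| ≤ K * ‖y‖ := by
  obtain ⟨C, hC⟩ := (isCompact_closedBall x 1).exists_bound_of_continuousOn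
    ((hg.continuous_fderiv one_ne_zero).continuousOn (s := closedBall x 1))
  set K : ℝ := max C 0 with hK
  have hK0 : 0 ≤ K := le_max_right _ _
  have hlip : LipschitzOnWith K.toNNReal g (closedBall x 1) := by
    refine Convex.lipschitzOnWith_of_nnnorm_hasFDerivWithin_le
      (f' := fun z => fderiv ℝ g z)
      (fun z _ => ((hg.differentiable one_ne_zero) z).hasFDerivAt.hasFDerivWithinAt) ?_
      (convex_closedBall x 1)
    intro z hz
    rw [← norm_toNNReal]
    exact Real.toNNReal_mono ((hC z hz).trans (le_max_left _ _))
  refine ⟨K, hK0, fun y hy => ?_⟩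
  have hx : x ∈ closedBall x 1 := mem_closedBall_self one_pos.le
  have hxy : x + y ∈ closedBall x 1 := by
    rw [mem_closedBall, dist_comm, dist_self_add_right]
    exact hy
  have := hlip.dist_le_mul x hx (x + y) hxy
  rw [Real.dist_eq, dist_self_add_right, Real.coe_toNNReal K hK0] at this
  exact this

lemma aux_integrable_kernel {n : ℕ} (hn : 0 < n) {s : ℝ} (hs0 : 0 < s) (hs1 : s < 1)
    {μ : EuclideanSpace ℝ (Fin n) → ℝ} (hμmeas : Measurable μ) {Lam : ℝ}
    (hμb : ∀ θ : EuclideanSpace ℝ (Fin n), ‖θ‖ = 1 → |μ θ| ≤ Lam)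
    {u : EuclideanSpace ℝ (Fin n) → ℝ} (hu : ContDiff ℝ 1 u) {M : ℝ} (hM : ∀ z, |u z| ≤ M)
    (x : EuclideanSpace ℝ (Fin n)) :
    Integrable (fun y : EuclideanSpace ℝ (Fin n) =>
      (u x - u (x + y)) * μ (‖y‖⁻¹ • y) / ‖y‖ ^ ((n : ℝ) + s)) volume := by
  have hn1 : (1:ℝ) ≤ (n:ℝ) := by exact_mod_cast hn
  have m1 : Measurable fun y : EuclideanSpace ℝ (Fin n) => u x - u (x + y) :=
    measurable_const.sub ((hu.continuous.measurable).comp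
      (measurable_const.add measurable_id : Measurable fun y : EuclideanSpace ℝ (Fin n) => x + y))
  have m2 : Measurable fun y : EuclideanSpace ℝ (Fin n) => μ (‖y‖⁻¹ • y) :=
    hμmeas.comp (((measurable_norm.inv).smul measurable_id :
      Measurable fun y : EuclideanSpace ℝ (Fin n) => ‖y‖⁻¹ • y))
  have m3 : Measurable fun y : EuclideanSpace ℝ (Fin n) => ‖y‖ ^ ((n : ℝ) + s) :=
    measurable_norm.pow_const _
  have hfm : Measurable fun y : EuclideanSpace ℝ (Fin n) =>
      (u x - u (x + y)) * μ (‖y‖⁻¹ • y) / ‖y‖ ^ ((n : ℝ) + s) := (m1.mul m2).div m3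
  obtain ⟨K, hK0, hKlip⟩ := aux_loclip hu x
  have hM0 : 0 ≤ M := (abs_nonneg _).trans (hM x)
  have hLam0 : 0 ≤ Lam := by
    have hθ : ‖EuclideanSpace.single (⟨0, hn⟩ : Fin n) (1:ℝ)‖ = 1 := by
      rw [EuclideanSpace.norm_single]; norm_num
    exact (abs_nonneg _).trans (hμb _ hθ)
  have hμb' : ∀ y : EuclideanSpace ℝ (Fin n), y ≠ 0 → |μ (‖y‖⁻¹ • y)| ≤ Lam := by
    intro y hy
    refine hμb _ ?_
    rw [norm_smul, norm_inv, norm_norm, inv_mul_cancel₀ (norm_ne_zero_iff.2 hy)]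
  have habs : ∀ y : EuclideanSpace ℝ (Fin n), y ≠ 0 →
      ‖(u x - u (x + y)) * μ (‖y‖⁻¹ • y) / ‖y‖ ^ ((n : ℝ) + s)‖
        = |u x - u (x + y)| * |μ (‖y‖⁻¹ • y)| / ‖y‖ ^ ((n:ℝ) + s) := by
    intro y hy
    have hden : (0:ℝ) < ‖y‖ ^ ((n:ℝ) + s) := Real.rpow_pos_of_pos (norm_pos_iff.2 hy) _
    rw [Real.norm_eq_abs, abs_div, abs_mul, abs_of_pos hden]
  have hIball : IntegrableOn (fun y : EuclideanSpace ℝ (Fin n) =>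
      (u x - u (x + y)) * μ (‖y‖⁻¹ • y) / ‖y‖ ^ ((n : ℝ) + s)) (ball 0 1) volume := by
    have hint := (aux_integrableOn_ball hn (t := 1 - ((n:ℝ) + s))
      (by linarith) (by linarith)).const_mul (Lam * K)
    refine Integrable.mono' hint hfm.aestronglyMeasurable.restrict ?_
    refine (ae_restrict_iff' measurableSet_ball).2 (Filter.Eventually.of_forall ?_)
    intro y hy
    rcases eq_or_ne y 0 with h0 | h0
    · simp only [h0, add_zero, sub_self, zero_mul, zero_div, norm_zero]
      positivity
    · have hy0 : (0:ℝ) < ‖y‖ := norm_pos_iff.2 h0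
      have hy1 : ‖y‖ < 1 := by simpa [mem_ball, dist_eq_norm] using hy
      have hden : (0:ℝ) < ‖y‖ ^ ((n:ℝ) + s) := Real.rpow_pos_of_pos hy0 _
      rw [habs y h0]
      have hnum : |u x - u (x + y)| * |μ (‖y‖⁻¹ • y)| ≤ (K * ‖y‖) * Lam :=
        mul_le_mul (hKlip y hy1.le) (hμb' y h0) (abs_nonneg _) (by positivity)
      calc |u x - u (x + y)| * |μ (‖y‖⁻¹ • y)| / ‖y‖ ^ ((n:ℝ) + s)
          ≤ (K * ‖y‖) * Lam / ‖y‖ ^ ((n:ℝ) + s) := by gcongr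
        _ = (Lam * K) * ‖y‖ ^ (1 - ((n:ℝ) + s)) := by
            rw [Real.rpow_sub hy0, Real.rpow_one]
            field_simp
  have hIcompl : IntegrableOn (fun y : EuclideanSpace ℝ (Fin n) =>
      (u x - u (x + y)) * μ (‖y‖⁻¹ • y) / ‖y‖ ^ ((n : ℝ) + s)) ((ball 0 1)ᶜ) volume := by
    have hint := (aux_integrableOn_compl (n := n) (t := -((n:ℝ) + s))
      (by linarith)).const_mul (Lam * (2 * M))
    refine Integrable.mono' hint hfm.aestronglyMeasurable.restrict ?_
    refine (ae_restrict_iff' measurableSet_ball.compl).2 (Filter.Eventually.of_forall ?_)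
    intro y hy
    have hy1 : (1:ℝ) ≤ ‖y‖ := by simpa [mem_ball, dist_eq_norm, not_lt] using hy
    have hy0 : (0:ℝ) < ‖y‖ := lt_of_lt_of_le one_pos hy1
    have h0 : y ≠ 0 := norm_pos_iff.1 hy0
    have hden : (0:ℝ) < ‖y‖ ^ ((n:ℝ) + s) := Real.rpow_pos_of_pos hy0 _
    rw [habs y h0]
    have hub : |u x - u (x + y)| ≤ 2 * M := by
      calc |u x - u (x + y)| ≤ |u x| + |u (x + y)| := abs_sub _ _
        _ ≤ 2 * M := by linarith [hM x, hM (x + y)]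
    have hnum : |u x - u (x + y)| * |μ (‖y‖⁻¹ • y)| ≤ (2 * M) * Lam :=
      mul_le_mul hub (hμb' y h0) (abs_nonneg _) (by positivity)
    calc |u x - u (x + y)| * |μ (‖y‖⁻¹ • y)| / ‖y‖ ^ ((n:ℝ) + s)
        ≤ (2 * M) * Lam / ‖y‖ ^ ((n:ℝ) + s) := by gcongr
      _ = (Lam * (2 * M)) * ‖y‖ ^ (-((n:ℝ) + s)) := by
          rw [Real.rpow_neg (norm_nonneg y)]
          field_simp
  have := integrableOn_union.2 ⟨hIball, hIcompl⟩
  rw [union_compl_self] at this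
  exact integrableOn_univ.1 this
lemma aux_opL_bound {n : ℕ} (hn : 0 < n) {s : ℝ} (hs0 : 0 < s) (hs1 : s < 1)
    {μ : EuclideanSpace ℝ (Fin n) → ℝ} (hμmeas : Measurable μ) {Lam : ℝ}
    (hμb : ∀ θ : EuclideanSpace ℝ (Fin n), ‖θ‖ = 1 → |μ θ| ≤ Lam)
    {v : EuclideanSpace ℝ (Fin n) → ℝ} (hv : ContDiff ℝ 1 v) {M : ℝ} (hM : ∀ z, |v z| ≤ M)
    (x : EuclideanSpace ℝ (Fin n))
    {K : ℝ} (hK0 : 0 ≤ K)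
    (hKlip : ∀ y : EuclideanSpace ℝ (Fin n), |v x - v (x + y)| ≤ K * ‖y‖)
    (hb1 : ∀ y : EuclideanSpace ℝ (Fin n), |v x - v (x + y)| ≤ 1) :
    |∫ y : EuclideanSpace ℝ (Fin n), (v x - v (x + y)) * μ (‖y‖⁻¹ • y) / ‖y‖ ^ ((n:ℝ) + s)|
      ≤ Lam * K * (∫ y in ball (0:EuclideanSpace ℝ (Fin n)) 1, ‖y‖ ^ (1 - ((n:ℝ) + s)))
        + Lam * (∫ y in (ball (0:EuclideanSpace ℝ (Fin n)) 1)ᶜ, ‖y‖ ^ (-((n:ℝ) + s))) := by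
  have hn1 : (1:ℝ) ≤ (n:ℝ) := by exact_mod_cast hn
  have hLam0 : 0 ≤ Lam := by
    have hθ : ‖EuclideanSpace.single (⟨0, hn⟩ : Fin n) (1:ℝ)‖ = 1 := by
      rw [EuclideanSpace.norm_single]; norm_num
    exact (abs_nonneg _).trans (hμb _ hθ)
  have hμb' : ∀ y : EuclideanSpace ℝ (Fin n), y ≠ 0 → |μ (‖y‖⁻¹ • y)| ≤ Lam := by
    intro y hy
    refine hμb _ ?_
    rw [norm_smul, norm_inv, norm_norm, inv_mul_cancel₀ (norm_ne_zero_iff.2 hy)]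
  set f : EuclideanSpace ℝ (Fin n) → ℝ :=
    fun y => (v x - v (x + y)) * μ (‖y‖⁻¹ • y) / ‖y‖ ^ ((n:ℝ) + s) with hf
  have hint : Integrable f volume := aux_integrable_kernel hn hs0 hs1 hμmeas hμb hv hM x
  have habs : ∀ y : EuclideanSpace ℝ (Fin n), y ≠ 0 →
      |f y| = |v x - v (x + y)| * |μ (‖y‖⁻¹ • y)| / ‖y‖ ^ ((n:ℝ) + s) := by
    intro y hy
    have hden : (0:ℝ) < ‖y‖ ^ ((n:ℝ) + s) := Real.rpow_pos_of_pos (norm_pos_iff.2 hy) _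
    rw [hf, abs_div, abs_mul, abs_of_pos hden]
  have hI1 : IntegrableOn (fun y : EuclideanSpace ℝ (Fin n) => ‖y‖ ^ (1 - ((n:ℝ) + s)))
      (ball (0:EuclideanSpace ℝ (Fin n)) 1) volume :=
    aux_integrableOn_ball hn (by linarith) (by linarith)
  have hI2 : IntegrableOn (fun y : EuclideanSpace ℝ (Fin n) => ‖y‖ ^ (-((n:ℝ) + s)))
      ((ball (0:EuclideanSpace ℝ (Fin n)) 1)ᶜ) volume :=
    aux_integrableOn_compl (by linarith)
  calc |∫ y, f y|
      ≤ ∫ y, |f y| := by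
        simpa [Real.norm_eq_abs] using norm_integral_le_integral_norm f (μ := volume)
    _ = (∫ y in ball (0:EuclideanSpace ℝ (Fin n)) 1, |f y|)
        + ∫ y in (ball (0:EuclideanSpace ℝ (Fin n)) 1)ᶜ, |f y| :=
        (integral_add_compl measurableSet_ball hint.abs).symm
    _ ≤ (∫ y in ball (0:EuclideanSpace ℝ (Fin n)) 1, (Lam * K) * ‖y‖ ^ (1 - ((n:ℝ) + s)))
        + ∫ y in (ball (0:EuclideanSpace ℝ (Fin n)) 1)ᶜ, Lam * ‖y‖ ^ (-((n:ℝ) + s)) := by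
        refine add_le_add ?_ ?_
        · refine setIntegral_mono_on hint.abs.integrableOn (hI1.const_mul _)
            measurableSet_ball ?_
          intro y hy
          rcases eq_or_ne y 0 with h0 | h0
          · simp only [hf, h0, add_zero, sub_self, zero_mul, zero_div, abs_zero]
            positivity
          · have hy0 : (0:ℝ) < ‖y‖ := norm_pos_iff.2 h0
            have hden : (0:ℝ) < ‖y‖ ^ ((n:ℝ) + s) := Real.rpow_pos_of_pos hy0 _
            rw [habs y h0]
            have hnum : |v x - v (x + y)| * |μ (‖y‖⁻¹ • y)| ≤ (K * ‖y‖) * Lam :=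
              mul_le_mul (hKlip y) (hμb' y h0) (abs_nonneg _) (by positivity)
            calc |v x - v (x + y)| * |μ (‖y‖⁻¹ • y)| / ‖y‖ ^ ((n:ℝ) + s)
                ≤ (K * ‖y‖) * Lam / ‖y‖ ^ ((n:ℝ) + s) := by gcongr
              _ = (Lam * K) * ‖y‖ ^ (1 - ((n:ℝ) + s)) := by
                  rw [Real.rpow_sub hy0, Real.rpow_one]
                  field_simp
        · refine setIntegral_mono_on hint.abs.integrableOn (hI2.const_mul _)
            measurableSet_ball.compl ?_
          intro y hy
          have hy1 : (1:ℝ) ≤ ‖y‖ := by simpa [mem_ball, dist_eq_norm, not_lt] using hy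
          have hy0 : (0:ℝ) < ‖y‖ := lt_of_lt_of_le one_pos hy1
          have h0 : y ≠ 0 := norm_pos_iff.1 hy0
          have hden : (0:ℝ) < ‖y‖ ^ ((n:ℝ) + s) := Real.rpow_pos_of_pos hy0 _
          rw [habs y h0]
          have hnum : |v x - v (x + y)| * |μ (‖y‖⁻¹ • y)| ≤ 1 * Lam :=
            mul_le_mul (hb1 y) (hμb' y h0) (abs_nonneg _) (by norm_num)
          calc |v x - v (x + y)| * |μ (‖y‖⁻¹ • y)| / ‖y‖ ^ ((n:ℝ) + s)
              ≤ 1 * Lam / ‖y‖ ^ ((n:ℝ) + s) := by gcongr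
            _ = Lam * ‖y‖ ^ (-((n:ℝ) + s)) := by
                rw [Real.rpow_neg (norm_nonneg y)]
                field_simp
    _ = Lam * K * (∫ y in ball (0:EuclideanSpace ℝ (Fin n)) 1, ‖y‖ ^ (1 - ((n:ℝ) + s)))
        + Lam * (∫ y in (ball (0:EuclideanSpace ℝ (Fin n)) 1)ᶜ, ‖y‖ ^ (-((n:ℝ) + s))) := by
        rw [integral_const_mul, integral_const_mul]
lemma aux_ae_ne_zero {n : ℕ} (hn : 0 < n) :
    ∀ᵐ y : EuclideanSpace ℝ (Fin n) ∂volume, y ≠ 0 := by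
  haveI : Nontrivial (EuclideanSpace ℝ (Fin n)) := by
    refine ⟨⟨0, EuclideanSpace.single (⟨0, hn⟩ : Fin n) 1, fun h => ?_⟩⟩
    have h2 := congrArg norm h
    rw [norm_zero, EuclideanSpace.norm_single] at h2
    norm_num at h2
  refine ae_iff.2 ?_
  simpa [not_not, Set.setOf_eq_eq_singleton] using
    measure_singleton (0 : EuclideanSpace ℝ (Fin n))

/-- The integro-differential operator `Lu(x) = ∫ (u(x) - u(x+y)) μ(y/|y|) |y|^{-(n+s)} dy`. -/
noncomputable def opLmu (n : ℕ) (s : ℝ) (μ : EuclideanSpace ℝ (Fin n) → ℝ)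
    (u : EuclideanSpace ℝ (Fin n) → ℝ) (x : EuclideanSpace ℝ (Fin n)) : ℝ :=
  ∫ y : EuclideanSpace ℝ (Fin n), (u x - u (x + y)) * μ (‖y‖⁻¹ • y) / ‖y‖ ^ ((n : ℝ) + s)

set_option maxHeartbeats 1000000 in
/-- a barrier-type maximum principle. For every `r > 0` there is `δ > 0`
(depending only on `n`, `s`, the ellipticity constants and `r`) such that: for every `a > 0`
and every bounded `C¹` function `w` with `Lw ≥ a` on `B_r ∩ {w ≤ 0}` and `w ≥ -δa` on `ℝⁿ`,
one has `w > 0` on the closed ball of radius `r/2`. -/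
theorem barrier_maximum_principle
    (n : ℕ) (hn : 2 ≤ n) (s : ℝ) (hs : s ∈ Set.Ioo (0:ℝ) 1)
    (μ : EuclideanSpace ℝ (Fin n) → ℝ) (hμmeas : Measurable μ)
    (lam Lam : ℝ) (hlam : 0 < lam) (hLam : lam ≤ Lam)
    (hμsymm : ∀ θ : EuclideanSpace ℝ (Fin n), ‖θ‖ = 1 → μ (-θ) = μ θ)
    (hμbound : ∀ θ : EuclideanSpace ℝ (Fin n), ‖θ‖ = 1 → μ θ ∈ Set.Icc lam Lam)
    (r : ℝ) (hr : 0 < r) :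
    ∃ δ : ℝ, 0 < δ ∧
      ∀ a : ℝ, 0 < a →
      ∀ w : EuclideanSpace ℝ (Fin n) → ℝ, ContDiff ℝ 1 w → (∃ M, ∀ x, |w x| ≤ M) →
      (∀ x ∈ Metric.ball (0 : EuclideanSpace ℝ (Fin n)) r, w x ≤ 0 → a ≤ opLmu n s μ w x) →
      (∀ x, -(δ * a) ≤ w x) →
  
    ∀ x ∈ Metric.closedBall (0 : EuclideanSpace ℝ (Fin n)) (r / 2), 0 < w x := by
  obtain ⟨hs0, hs1⟩ := hs
  have hn0 : 0 < n := by omega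
  have hμb' : ∀ θ : EuclideanSpace ℝ (Fin n), ‖θ‖ = 1 → |μ θ| ≤ Lam := by
    intro θ hθ
    obtain ⟨h1, h2⟩ := hμbound θ hθ
    rw [abs_of_nonneg (by linarith)]
    exact h2
  have hLam0 : 0 < Lam := lt_of_lt_of_le hlam hLam
  -- the bump function
  set b : ContDiffBump (0 : EuclideanSpace ℝ (Fin n)) :=
    ⟨r/8, r/4, by positivity, by linarith⟩ with hb
  obtain ⟨K₀, hK₀⟩ := ContDiff.lipschitzWith_of_hasCompactSupport
    b.hasCompactSupport (b.contDiff (n := ⊤)) (by simp)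
  -- the two reference integrals
  set I₁ : ℝ := ∫ y in ball (0:EuclideanSpace ℝ (Fin n)) 1, ‖y‖ ^ (1 - ((n:ℝ) + s)) with hI₁
  set I₂ : ℝ := ∫ y in (ball (0:EuclideanSpace ℝ (Fin n)) 1)ᶜ, ‖y‖ ^ (-((n:ℝ) + s)) with hI₂
  have hI₁0 : 0 ≤ I₁ := setIntegral_nonneg measurableSet_ball
    (fun y _ => Real.rpow_nonneg (norm_nonneg y) _)
  have hI₂0 : 0 ≤ I₂ := setIntegral_nonneg measurableSet_ball.compl
    (fun y _ => Real.rpow_nonneg (norm_nonneg y) _)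
  set C : ℝ := Lam * ((K₀:ℝ) * I₁ + I₂) + 1 with hC
  have hC1 : 1 ≤ C := by
    have : 0 ≤ Lam * ((K₀:ℝ) * I₁ + I₂) := by positivity
    linarith
  have hC0 : 0 < C := by linarith
  refine ⟨1 / (8 * C), by positivity, ?_⟩
  intro a ha w hw hMex hLw hlow x₀ hx₀
  obtain ⟨M, hM⟩ := hMex
  by_contra hcon
  push_neg at hcon
  set δ : ℝ := 1 / (8 * C) with hδ
  have hδ0 : 0 < δ := by positivity
  set c : ℝ := 4 * (δ * a) with hc
  have hc0 : 0 < c := by positivity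
  set φ : EuclideanSpace ℝ (Fin n) → ℝ := fun z => 1 - b (z - x₀) with hφ
  have hφcd : ContDiff ℝ 1 φ :=
    contDiff_const.sub ((b.contDiff (n := 1)).comp (contDiff_id.sub contDiff_const))
  have hφ01 : ∀ z, 0 ≤ φ z ∧ φ z ≤ 1 := by
    intro z
    constructor
    · simp only [hφ, sub_nonneg]; exact b.le_one
    · simp only [hφ]; linarith [b.nonneg (x := z - x₀)]
  have hφb : ∀ z, |φ z| ≤ 1 := by
    intro z
    rw [abs_of_nonneg (hφ01 z).1]
    exact (hφ01 z).2
  set h : EuclideanSpace ℝ (Fin n) → ℝ := fun z => w z + c * φ z with hh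
  have hhcd : ContDiff ℝ 1 h := hw.add (contDiff_const.mul hφcd)
  have hhb : ∀ z, |h z| ≤ M + c := by
    intro z
    calc |h z| ≤ |w z| + |c * φ z| := abs_add_le _ _
      _ ≤ M + c := by
          refine add_le_add (hM z) ?_
          rw [abs_mul, abs_of_pos hc0]
          nlinarith [hφb z, abs_nonneg (φ z)]
  -- minimum over closed ball
  obtain ⟨x₁, hx₁mem, hx₁min⟩ := (isCompact_closedBall x₀ (r/4)).exists_isMinOn
    ⟨x₀, mem_closedBall_self (by positivity)⟩ hhcd.continuous.continuousOn
  have hx₁min' : ∀ z ∈ closedBall x₀ (r/4), h x₁ ≤ h z := isMinOn_iff.1 hx₁min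
  have hφx₀ : φ x₀ = 0 := by
    simp only [hφ, sub_self]
    rw [b.one_of_mem_closedBall (mem_closedBall_self (by positivity))]
    ring
  have hhx₀ : h x₀ = w x₀ := by simp [hh, hφx₀]
  have hwx₀ : w x₀ ≤ 0 := hcon
  have hhx₁0 : h x₁ ≤ 0 := by
    have := hx₁min' x₀ (mem_closedBall_self (by positivity))
    rw [hhx₀] at this
    linarith
  have hglob : ∀ z, h x₁ ≤ h z := by
    intro z
    by_cases hz : z ∈ closedBall x₀ (r/4)
    · exact hx₁min' z hz
    · have hdist : r/4 ≤ dist (z - x₀) 0 := by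
        rw [dist_zero_right]
        have : r/4 < dist z x₀ := by
          simpa [mem_closedBall, not_le] using hz
        rw [dist_eq_norm] at this
        linarith
      have hbz : b (z - x₀) = 0 := b.zero_of_le_dist hdist
      have hφz : φ z = 1 := by simp [hφ, hbz]
      have : h z = w z + c := by rw [hh]; simp [hφz]
      rw [this]
      have := hlow z
      have : -(δ * a) + c ≤ w z + c := by linarith [hlow z]
      calc h x₁ ≤ 0 := hhx₁0
        _ ≤ -(δ * a) + c := by rw [hc]; nlinarith
        _ ≤ w z + c := this
  have hwx₁ : w x₁ ≤ 0 := by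
    have : w x₁ = h x₁ - c * φ x₁ := by rw [hh]; ring
    rw [this]
    nlinarith [(hφ01 x₁).1, hhx₁0]
  have hx₁ball : x₁ ∈ ball (0:EuclideanSpace ℝ (Fin n)) r := by
    rw [mem_ball]
    calc dist x₁ 0 ≤ dist x₁ x₀ + dist x₀ 0 := dist_triangle _ _ _
      _ ≤ r/4 + r/2 := add_le_add (mem_closedBall.1 hx₁mem) (mem_closedBall.1 hx₀)
      _ < r := by linarith
  have haLw : a ≤ opLmu n s μ w x₁ := hLw x₁ hx₁ball hwx₁
  -- integrability
  have Iw := aux_integrable_kernel hn0 hs0 hs1 hμmeas hμb' hw hM x₁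
  have Iφ := aux_integrable_kernel hn0 hs0 hs1 hμmeas hμb' hφcd hφb x₁
  have Ih := aux_integrable_kernel hn0 hs0 hs1 hμmeas hμb' hhcd hhb x₁
  -- decomposition
  have hdecomp : opLmu n s μ w x₁ = opLmu n s μ h x₁ - c * opLmu n s μ φ x₁ := by
    unfold opLmu
    rw [← integral_const_mul c, ← integral_sub Ih (Iφ.const_mul c)]
    congr 1
    funext y
    simp only [hh]
    ring
  -- L h x₁ ≤ 0
  have hLh : opLmu n s μ h x₁ ≤ 0 := by
    unfold opLmu
    refine integral_nonpos_of_ae ?_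
    filter_upwards [aux_ae_ne_zero hn0] with y hy
    have hμnn : 0 ≤ μ (‖y‖⁻¹ • y) := by
      have hθ : ‖(‖y‖⁻¹ • y : EuclideanSpace ℝ (Fin n))‖ = 1 := by
        rw [norm_smul, norm_inv, norm_norm, inv_mul_cancel₀ (norm_ne_zero_iff.2 hy)]
      linarith [(hμbound _ hθ).1]
    have hnum : (h x₁ - h (x₁ + y)) * μ (‖y‖⁻¹ • y) ≤ 0 :=
      mul_nonpos_of_nonpos_of_nonneg (by linarith [hglob (x₁ + y)]) hμnn
    exact div_nonpos_of_nonpos_of_nonneg hnum (Real.rpow_nonneg (norm_nonneg y) _)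
  -- bound on L φ x₁
  have hKlip : ∀ y : EuclideanSpace ℝ (Fin n), |φ x₁ - φ (x₁ + y)| ≤ (K₀:ℝ) * ‖y‖ := by
    intro y
    have h1 : φ x₁ - φ (x₁ + y) = b (x₁ + y - x₀) - b (x₁ - x₀) := by simp only [hφ]; ring
    rw [h1]
    have := hK₀.dist_le_mul (x₁ + y - x₀) (x₁ - x₀)
    rw [Real.dist_eq, dist_eq_norm] at this
    have he : x₁ + y - x₀ - (x₁ - x₀) = y := by abel
    rw [he] at this
    exact this
  have hb1 : ∀ y : EuclideanSpace ℝ (Fin n), |φ x₁ - φ (x₁ + y)| ≤ 1 := by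
    intro y
    rw [abs_sub_le_iff]
    constructor <;> nlinarith [(hφ01 x₁).1, (hφ01 x₁).2, (hφ01 (x₁+y)).1, (hφ01 (x₁+y)).2]
  have hLφ : |opLmu n s μ φ x₁| ≤ Lam * ((K₀:ℝ) * I₁ + I₂) := by
    have := aux_opL_bound hn0 hs0 hs1 hμmeas hμb' hφcd hφb x₁
      (K₀.coe_nonneg) hKlip hb1
    unfold opLmu
    rw [hI₁, hI₂]
    calc |∫ y : EuclideanSpace ℝ (Fin n),
          (φ x₁ - φ (x₁ + y)) * μ (‖y‖⁻¹ • y) / ‖y‖ ^ ((n:ℝ) + s)|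
        ≤ Lam * (K₀:ℝ) * I₁ + Lam * I₂ := this
      _ = Lam * ((K₀:ℝ) * I₁ + I₂) := by ring
  -- conclusion
  have hfinal : a ≤ c * C := by
    calc a ≤ opLmu n s μ w x₁ := haLw
      _ = opLmu n s μ h x₁ - c * opLmu n s μ φ x₁ := hdecomp
      _ ≤ 0 + c * |opLmu n s μ φ x₁| := by
          nlinarith [neg_abs_le (opLmu n s μ φ x₁), hLh, hc0.le]
      _ ≤ c * (Lam * ((K₀:ℝ) * I₁ + I₂)) := by
          rw [zero_add]
          exact mul_le_mul_of_nonneg_left hLφ hc0.le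
      _ ≤ c * C := by
          rw [hC]
          nlinarith [hc0.le]
  have : c * C = a / 2 := by
    rw [hc, hδ]
    field_simp
    ring
  rw [this] at hfinal
  linarith
end

section
/- Let α ∈ (0,1) and n ≥ 1. There exists C > 0, depending only on α, such that the following holds. Let a ∈ (0,1), set j_a := ⌊log a / log(2^{−α})⌋, let X ⊆ ℝⁿ, and let ω₀, ω₁, …, ω_{j_a} ∈ S^{n−1} be such that for every j ∈ {0,…,j_a}: {x : x·ω_j ≤ −a 2^{j(1+α)}} ⊆ X ⊆ {x : x·ω_j ≤ a 2^{j(1+α)}} in B_{2^j}. Then |ω_j − ω₀| ≤ C a 2^{jα} for every j ∈ {0,…,j_a}, and for every j ∈ {0,…,j_a}: {x : x·ω₀ ≤ −C a 2^{j(1+α)}} ⊆ X ⊆ {x : x·ω₀ ≤ C a 2^{j(1+α)}} in B_{2^j}. -/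
open MeasureTheory Set Metric Filter

/-- `j_a := ⌊ log a / log (2^{-α}) ⌋`. -/
noncomputable def jIdx (α a : ℝ) : ℤ := ⌊Real.log a / Real.log ((2:ℝ) ^ (-α))⌋

private lemma key_slab {E : Type*} [NormedAddCommGroup E] [InnerProductSpace ℝ E]
    {u v : E} (hu : ‖u‖ = 1) (hv : ‖v‖ = 1) {r δ : ℝ} (hr : 0 < r)
    (hδ : 0 ≤ δ) (hsmall : δ ≤ r / 4)
    (H : ∀ x : E, ‖x‖ < r → (inner ℝ x u : ℝ) ≤ -δ → (inner ℝ x v : ℝ) ≤ δ) :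
    ‖u - v‖ ≤ 8 * δ / r := by
  set c : ℝ := inner ℝ u v with hc
  have hc1 : c ≤ 1 := by
    calc c ≤ ‖u‖ * ‖v‖ := real_inner_le_norm u v
    _ = 1 := by rw [hu, hv]; ring
  have huu : (inner ℝ u u : ℝ) = 1 := by
    rw [real_inner_self_eq_norm_sq, hu]; norm_num
  have hvv : (inner ℝ v v : ℝ) = 1 := by
    rw [real_inner_self_eq_norm_sq, hv]; norm_num
  have hvu : (inner ℝ v u : ℝ) = c := by rw [hc]; exact real_inner_comm u v
  have hstep1 : -(r/2) * c ≤ δ := by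
    have h1 : ‖(-(r/2)) • u‖ < r := by
      rw [norm_smul, hu, mul_one, Real.norm_eq_abs, abs_of_nonpos (by linarith)]
      linarith
    have h2 : (inner ℝ ((-(r/2)) • u) u : ℝ) ≤ -δ := by
      rw [real_inner_smul_left, huu]; linarith
    have h3 := H _ h1 h2
    rwa [real_inner_smul_left, ← hc] at h3
  have hclb : -(1/2 : ℝ) ≤ c := by nlinarith
  set w : E := v - c • u with hw
  have hwu : (inner ℝ w u : ℝ) = 0 := by
    simp only [hw, inner_sub_left, real_inner_smul_left, huu, mul_one, hvu]; ring
  have huw : (inner ℝ u w : ℝ) = 0 := by rw [← hwu]; exact real_inner_comm w u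
  have hwv : (inner ℝ w v : ℝ) = 1 - c^2 := by
    simp only [hw, inner_sub_left, real_inner_smul_left, hvv, mul_one, ← hc]; ring
  have hww : ‖w‖^2 = 1 - c^2 := by
    rw [← real_inner_self_eq_norm_sq]
    simp only [hw, inner_sub_right, real_inner_smul_right]
    rw [show (v - c • u) = w from rfl, hwv, hwu]; ring
  have hnw : ‖w‖ ≤ 4 * δ / r := by
    rcases eq_or_ne w 0 with h0 | h0
    · rw [h0, norm_zero]; positivity
    · have hnw0 : 0 < ‖w‖ := norm_pos_iff.2 h0
      set x : E := (-δ) • u + (r/2) • ‖w‖⁻¹ • w with hx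
      have hxu : (inner ℝ x u : ℝ) = -δ := by
        simp only [hx, inner_add_left, real_inner_smul_left, huu, hwu]; ring
      have hxv : (inner ℝ x v : ℝ) = -δ * c + (r/2) * ‖w‖ := by
        simp only [hx, inner_add_left, real_inner_smul_left, hwv, ← hc]
        rw [← hww]; field_simp
      have hxn : ‖x‖ < r := by
        have h1 : ‖x‖^2 = δ^2 + (r/2)^2 := by
          rw [hx, norm_add_sq_real]
          have hz : (inner ℝ ((-δ) • u) ((r/2) • ‖w‖⁻¹ • w) : ℝ) = 0 := by
            rw [real_inner_smul_left, real_inner_smul_right, real_inner_smul_right, huw]; ring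
          rw [hz, norm_smul, norm_smul, norm_smul, hu, Real.norm_eq_abs, Real.norm_eq_abs,
            Real.norm_eq_abs, abs_of_nonpos (by linarith : -δ ≤ 0),
            abs_of_nonneg (by linarith : (0:ℝ) ≤ r/2), abs_of_nonneg (inv_nonneg.2 hnw0.le)]
          field_simp
          ring
        nlinarith [norm_nonneg x]
      have h4 := H x hxn (le_of_eq hxu)
      rw [hxv] at h4
      rw [le_div_iff₀ hr]
      nlinarith [mul_nonneg hδ (by linarith : (0:ℝ) ≤ 1 - c)]
  have hA : ‖u - v‖^2 = 2 - 2*c := by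
    rw [norm_sub_sq_real, hu, hv, ← hc]; ring
  have h2' : 1 - c ≤ 2 * ‖w‖^2 := by nlinarith
  have h3' : ‖w‖^2 ≤ (4*δ/r)^2 := by
    have := pow_le_pow_left₀ (norm_nonneg w) hnw 2
    simpa using this
  have h8 : 0 ≤ 8*δ/r := by positivity
  have hfin : ‖u - v‖^2 ≤ (8*δ/r)^2 := by
    have : (8*δ/r)^2 = 4 * (4*δ/r)^2 := by ring
    nlinarith
  exact (pow_le_pow_iff_left₀ (norm_nonneg _) h8 (by norm_num)).1 hfin

set_option maxHeartbeats 1000000 in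
/-- if a set is trapped in a sequence of slabs (with varying orientations) in
dyadic balls, then it is trapped in a sequence of parallel slabs, with a quantitative control
`|ω_j − ω₀| ≤ C a 2^{jα}` on the orientations. The constant `C` depends only on `α`. -/
theorem geometric_slab_lemma (α : ℝ) (hα : α ∈ Set.Ioo (0:ℝ) 1) :
    ∃ C : ℝ, 0 < C ∧
      ∀ (n : ℕ), 1 ≤ n →
      ∀ a : ℝ, a ∈ Set.Ioo (0:ℝ) 1 →
      ∀ X : Set (EuclideanSpace ℝ (Fin n)),
      ∀ ω : ℕ → EuclideanSpace ℝ (Fin n),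
      (∀ j : ℕ, (j : ℤ) ≤ jIdx α a → ‖ω j‖ = 1) →
      (∀ j : ℕ, (j : ℤ) ≤ jIdx α a →
        ({x : EuclideanSpace ℝ (Fin n) | (inner ℝ x (ω j) : ℝ) ≤ -(a * 2 ^ ((j:ℝ) * (1 + α)))}
            ∩ Metric.ball 0 (2 ^ j) ⊆ X) ∧
        (X ∩ Metric.ball 0 (2 ^ j)
            ⊆ {x : EuclideanSpace ℝ (Fin n) | (inner ℝ x (ω j) : ℝ) ≤ a * 2 ^ ((j:ℝ) * (1 + α))})) →
      ∀ j : ℕ, (j : ℤ) ≤ jIdx α a →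
        ‖ω j - ω 0‖ ≤ C * a * 2 ^ ((j:ℝ) * α) ∧
        ({x : EuclideanSpace ℝ (Fin n) | (inner ℝ x (ω 0) : ℝ) ≤ -(C * a * 2 ^ ((j:ℝ) * (1 + α)))}
            ∩ Metric.ball 0 (2 ^ j) ⊆ X) ∧
        (X ∩ Metric.ball 0 (2 ^ j)
            ⊆ {x : EuclideanSpace ℝ (Fin n) | (inner ℝ x (ω 0) : ℝ) ≤ C * a * 2 ^ ((j:ℝ) * (1 + α))}) := by
  obtain ⟨hα0, hα1⟩ := hα
  have h2 : (0:ℝ) < 2 := by norm_num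
  have hβ1 : (1:ℝ) < (2:ℝ) ^ α := by
    rw [show (1:ℝ) = (2:ℝ) ^ (0:ℝ) by simp]
    exact Real.rpow_lt_rpow_of_exponent_lt (by norm_num) hα0
  have hβ2 : (2:ℝ) ^ α ≤ 2 := by
    calc (2:ℝ) ^ α ≤ (2:ℝ) ^ (1:ℝ) := Real.rpow_le_rpow_of_exponent_le (by norm_num) hα1.le
    _ = 2 := Real.rpow_one 2
  set β : ℝ := (2:ℝ) ^ α with hβdef
  set K : ℝ := 32 / (β - 1) with hKdef
  have hKpos : 0 < K := div_pos (by norm_num) (by linarith)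
  have hβne : β - 1 ≠ 0 := ne_of_gt (by linarith)
  refine ⟨64 + K, by linarith, ?_⟩
  rintro n hn a ⟨ha0, ha1⟩ X ω hunit hyp j hj
  have hsplit : ∀ i : ℕ, (2:ℝ) ^ ((i:ℝ) * (1 + α)) = (2:ℝ) ^ ((i:ℝ) * α) * 2 ^ i := by
    intro i
    rw [show (i:ℝ)*(1+α) = (i:ℝ)*α + (i:ℝ) by ring, Real.rpow_add h2, Real.rpow_natCast]
  have hEpos : ∀ i : ℕ, (0:ℝ) < (2:ℝ) ^ ((i:ℝ) * α) := fun i => Real.rpow_pos_of_pos h2 _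
  have hsucc : ∀ i : ℕ, (2:ℝ) ^ ((↑(i+1):ℝ) * α) = (2:ℝ) ^ ((i:ℝ)*α) * β := by
    intro i; rw [hβdef, ← Real.rpow_add h2]; congr 1; push_cast; ring
  -- one-step comparison
  have step : ∀ i : ℕ, ((i:ℤ)+1) ≤ jIdx α a → a * (2:ℝ) ^ ((↑(i+1):ℝ) * α) ≤ 1/16 →
      ‖ω (i+1) - ω i‖ ≤ 16 * a * (2:ℝ) ^ ((↑(i+1):ℝ) * α) := by
    intro i hi1 hsm
    have hi : (i:ℤ) ≤ jIdx α a := by linarith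
    have hui := hunit i hi
    have hui1 := hunit (i+1) (by exact_mod_cast hi1)
    set δ : ℝ := a * (2:ℝ) ^ ((↑(i+1):ℝ) * (1+α)) with hδdef
    have hδpos : 0 < δ := mul_pos ha0 (Real.rpow_pos_of_pos h2 _)
    have h2i : (0:ℝ) < (2:ℝ)^i := by positivity
    have hδval : δ = a * (2:ℝ) ^ ((↑(i+1):ℝ)*α) * 2^(i+1) := by
      rw [hδdef, hsplit (i+1)]; ring
    have hsmall : δ ≤ (2:ℝ)^i / 4 := by
      rw [hδval, pow_succ]
      nlinarith [hEpos (i+1)]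
    have hball : (2:ℝ)^i < 2^(i+1) := by rw [pow_succ]; nlinarith
    have H : ∀ x : EuclideanSpace ℝ (Fin n), ‖x‖ < (2:ℝ)^i →
        (inner ℝ x (ω i) : ℝ) ≤ -δ → (inner ℝ x (ω (i+1)) : ℝ) ≤ δ := by
      intro x hx hxin
      have hle : a * (2:ℝ) ^ ((i:ℝ)*(1+α)) ≤ δ := by
        rw [hδdef]
        refine mul_le_mul_of_nonneg_left ?_ ha0.le
        refine Real.rpow_le_rpow_of_exponent_le (by norm_num) ?_
        push_cast; nlinarith
      have hxX : x ∈ X := by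
        refine (hyp i hi).1 ⟨?_, mem_ball_zero_iff.mpr hx⟩
        simp only [Set.mem_setOf_eq]
        linarith
      have h5 := (hyp (i+1) (by exact_mod_cast hi1)).2
        ⟨hxX, mem_ball_zero_iff.mpr (lt_trans hx hball)⟩
      simpa only [Set.mem_setOf_eq, ← hδdef] using h5
    have hkey := key_slab hui hui1 h2i hδpos.le hsmall H
    have heq : 8 * δ / (2:ℝ)^i = 16 * a * (2:ℝ)^((↑(i+1):ℝ)*α) := by
      rw [hδval, pow_succ]; field_simp; ring
    rw [norm_sub_rev, ← heq]
    exact hkey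
  -- chained comparison
  have chain : ∀ i : ℕ, (i:ℤ) ≤ jIdx α a → a * (2:ℝ)^((i:ℝ)*α) ≤ 1/16 →
      ‖ω i - ω 0‖ ≤ 32 * a * ((2:ℝ)^((i:ℝ)*α) - 1) / (β - 1) := by
    intro i
    induction i with
    | zero =>
      intro _ _
      simp only [Nat.cast_zero, zero_mul, Real.rpow_zero, sub_self, norm_zero, mul_zero, zero_div]
      exact le_rfl
    | succ i ih =>
      intro hi1 hsm
      have hi1' : ((i:ℤ)+1) ≤ jIdx α a := by exact_mod_cast hi1
      have hii : (i:ℤ) ≤ jIdx α a := by linarith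
      have hmono : (2:ℝ)^((i:ℝ)*α) ≤ (2:ℝ)^((↑(i+1):ℝ)*α) := by
        refine Real.rpow_le_rpow_of_exponent_le (by norm_num) ?_
        push_cast; nlinarith
      have hsm' : a * (2:ℝ)^((i:ℝ)*α) ≤ 1/16 :=
        le_trans (mul_le_mul_of_nonneg_left hmono ha0.le) hsm
      have hst := step i hi1' hsm
      have hih := ih hii hsm'
      have htri : ‖ω (i+1) - ω 0‖ ≤ ‖ω (i+1) - ω i‖ + ‖ω i - ω 0‖ := by
        have : ω (i+1) - ω 0 = (ω (i+1) - ω i) + (ω i - ω 0) := by abel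
        rw [this]; exact norm_add_le _ _
      have hEi := hEpos i
      have hrw : 32 * a * ((2:ℝ)^((↑(i+1):ℝ)*α) - 1) / (β - 1)
          = 32 * a * ((2:ℝ)^((i:ℝ)*α) - 1) / (β - 1) + 32 * a * (2:ℝ)^((i:ℝ)*α) := by
        rw [hsucc i]
        field_simp [hβne]
        ring
      have halg : 16 * a * (2:ℝ)^((↑(i+1):ℝ)*α)
          ≤ 32 * a * (2:ℝ)^((i:ℝ)*α) := by
        rw [hsucc i]
        nlinarith [mul_nonneg (mul_nonneg (by linarith : (0:ℝ) ≤ 16*a) hEi.le)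
          (by linarith : (0:ℝ) ≤ 2 - β)]
      rw [hrw]
      linarith
  -- wrap up
  have hK32 : K * (β - 1) = 32 := by
    rw [hKdef]; exact div_mul_cancel₀ 32 hβne
  clear_value K β
  clear hKdef hβdef
  have huj := hunit j hj
  have hu0 : ‖ω 0‖ = 1 := by
    refine hunit 0 (le_trans ?_ hj)
    exact_mod_cast Int.natCast_nonneg j
  have hEj := hEpos j
  have h2j : (0:ℝ) < (2:ℝ)^j := by positivity
  by_cases hcase : a * (2:ℝ)^((j:ℝ)*α) ≤ 1/16
  · -- small case
    have hnb : ‖ω j - ω 0‖ ≤ K * a * (2:ℝ)^((j:ℝ)*α) := by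
      have hc := chain j hj hcase
      have heq : 32 * a * ((2:ℝ)^((j:ℝ)*α) - 1) / (β - 1)
          = K * a * ((2:ℝ)^((j:ℝ)*α) - 1) := by
        rw [← hK32]; field_simp
      rw [heq] at hc
      nlinarith [mul_pos hKpos ha0]
    refine ⟨by nlinarith [mul_pos ha0 hEj], ?_, ?_⟩
    · rintro x ⟨hxS, hxB⟩
      simp only [Set.mem_setOf_eq] at hxS
      have hxn : ‖x‖ < (2:ℝ)^j := mem_ball_zero_iff.1 hxB
      refine (hyp j hj).1 ⟨?_, hxB⟩
      simp only [Set.mem_setOf_eq]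
      have hinn : (inner ℝ x (ω j) : ℝ) - inner ℝ x (ω 0) = inner ℝ x (ω j - ω 0) := by
        rw [inner_sub_right]
      have hcs : (inner ℝ x (ω j - ω 0) : ℝ) ≤ ‖x‖ * ‖ω j - ω 0‖ := real_inner_le_norm _ _
      have hxK : ‖x‖ * ‖ω j - ω 0‖ ≤ (2:ℝ)^j * (K * a * (2:ℝ)^((j:ℝ)*α)) :=
        mul_le_mul hxn.le hnb (norm_nonneg _) h2j.le
      rw [hsplit j] at hxS ⊢
      nlinarith [mul_pos (mul_pos ha0 hEj) h2j]
    · rintro x ⟨hxX, hxB⟩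
      simp only [Set.mem_setOf_eq]
      have hxn : ‖x‖ < (2:ℝ)^j := mem_ball_zero_iff.1 hxB
      have h1 := (hyp j hj).2 ⟨hxX, hxB⟩
      simp only [Set.mem_setOf_eq] at h1
      have hinn : (inner ℝ x (ω 0) : ℝ) - inner ℝ x (ω j) = inner ℝ x (ω 0 - ω j) := by
        rw [inner_sub_right]
      have hcs : (inner ℝ x (ω 0 - ω j) : ℝ) ≤ ‖x‖ * ‖ω 0 - ω j‖ := real_inner_le_norm _ _
      have hxK : ‖x‖ * ‖ω 0 - ω j‖ ≤ (2:ℝ)^j * (K * a * (2:ℝ)^((j:ℝ)*α)) := by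
        rw [norm_sub_rev]
        exact mul_le_mul hxn.le hnb (norm_nonneg _) h2j.le
      rw [hsplit j] at h1 ⊢
      nlinarith [mul_pos (mul_pos ha0 hEj) h2j]
  · -- large case : trivial bounds
    push_neg at hcase
    have h4 : (4:ℝ) ≤ (64 + K) * a * (2:ℝ)^((j:ℝ)*α) := by
      nlinarith [mul_nonneg hKpos.le (mul_pos ha0 hEj).le]
    refine ⟨?_, ?_, ?_⟩
    · have := norm_sub_le (ω j) (ω 0)
      rw [huj, hu0] at this
      linarith
    · rintro x ⟨hxS, hxB⟩
      exfalso
      simp only [Set.mem_setOf_eq] at hxS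
      have hxn : ‖x‖ < (2:ℝ)^j := mem_ball_zero_iff.1 hxB
      have habs : |(inner ℝ x (ω 0) : ℝ)| ≤ ‖x‖ * ‖ω 0‖ := abs_real_inner_le_norm _ _
      rw [hu0, mul_one] at habs
      have hlb : -‖x‖ ≤ (inner ℝ x (ω 0) : ℝ) := (abs_le.1 habs).1
      rw [hsplit j] at hxS
      nlinarith [mul_le_mul_of_nonneg_right h4 h2j.le]
    · rintro x ⟨hxX, hxB⟩
      simp only [Set.mem_setOf_eq]
      have hxn : ‖x‖ < (2:ℝ)^j := mem_ball_zero_iff.1 hxB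
      have habs : |(inner ℝ x (ω 0) : ℝ)| ≤ ‖x‖ * ‖ω 0‖ := abs_real_inner_le_norm _ _
      rw [hu0, mul_one] at habs
      have hub : (inner ℝ x (ω 0) : ℝ) ≤ ‖x‖ := (le_abs_self _).trans habs
      rw [hsplit j]
      nlinarith
end
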